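/- arXiv:2512.04650 — 13 statements merged into one kernel-verified Lean document; each statement's English description precedes it below -/
import Mathlib

section
/- Let f be a bijection of the interval (0,1] onto itself with inverse Ψ, with f(1) = 1, such that f is a Weierstrass function on (0,1]. Then for every n ≥ 2 and all x₁, …, xₙ ∈ (0,1]: (∑_{i=1}^n x_i) - (n-1) ≤ f(∏_{i=1}^n Ψ(x_i)) ≤ ∏_{i=1}^n x_i. -/
private lemma weierstrass_list_aux (f : ℝ → ℝ)
    (hf_maps : Set.MapsTo f (Set.Ioc 0 1) (Set.Ioc 0 1))
    (hW : ∀ x ∈ Set.Ioc (0:ℝ) 1, ∀ y ∈ Set.Ioc (0:ℝ) 1,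
      f x + f y - 1 ≤ f (x * y) ∧ f (x * y) ≤ f x * f y) :
    ∀ l : List ℝ, l ≠ [] → (∀ y ∈ l, y ∈ Set.Ioc (0:ℝ) 1) →
      l.prod ∈ Set.Ioc (0:ℝ) 1 ∧
      ((l.map f).sum - ((l.length : ℝ) - 1) ≤ f l.prod ∧ f l.prod ≤ (l.map f).prod) := by
  intro l
  induction l with
  | nil => intro h; exact absurd rfl h
  | cons a t ih =>
    intro _ hmem
    have ha : a ∈ Set.Ioc (0:ℝ) 1 := hmem a (by simp)
    rcases eq_or_ne t [] with rfl | ht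
    · simp [ha]
    · have ht' : ∀ y ∈ t, y ∈ Set.Ioc (0:ℝ) 1 := fun y hy => hmem y (by simp [hy])
      obtain ⟨hprod, hlow, hhigh⟩ := ih ht ht'
      have hmul : a * t.prod ∈ Set.Ioc (0:ℝ) 1 := by
        constructor
        · exact mul_pos ha.1 hprod.1
        · calc a * t.prod ≤ 1 * 1 := by
                apply mul_le_mul ha.2 hprod.2 hprod.1.le zero_le_one
          _ = 1 := by ring
      have hWa := hW a ha t.prod hprod
      refine ⟨by simpa using hmul, ?_, ?_⟩
      · have : f a + ((t.map f).sum - ((t.length : ℝ) - 1)) - 1 ≤ f a + f t.prod - 1 := by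
          linarith
        simp only [List.prod_cons, List.map_cons, List.sum_cons, List.length_cons]
        push_cast
        linarith [hWa.1]
      · have hfa : 0 < f a := (hf_maps ha).1
        simp only [List.prod_cons, List.map_cons, List.prod_cons]
        calc f (a * t.prod) ≤ f a * f t.prod := hWa.2
          _ ≤ f a * (t.map f).prod := by
              apply mul_le_mul_of_nonneg_left hhigh hfa.le

/-- If `f` is a bijection of `(0,1]` onto itself with inverse `Ψ`, `f 1 = 1`, and `f` is a
Weierstrass function on `(0,1]`, then for every `n ≥ 2` and all `x₁, …, xₙ ∈ (0,1]`:
`(∑ i, x i) - (n - 1) ≤ f (∏ i, Ψ (x i)) ≤ ∏ i, x i`. -/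
theorem weierstrass_inverse_prod_Ioc (f Ψ : ℝ → ℝ)
    (hf_maps : Set.MapsTo f (Set.Ioc 0 1) (Set.Ioc 0 1))
    (hΨ_maps : Set.MapsTo Ψ (Set.Ioc 0 1) (Set.Ioc 0 1))
    (hΨf : ∀ x ∈ Set.Ioc (0:ℝ) 1, Ψ (f x) = x)
    (hfΨ : ∀ x ∈ Set.Ioc (0:ℝ) 1, f (Ψ x) = x)
    (hpos : ∀ x ∈ Set.Ioc (0:ℝ) 1, 0 < f x)
    (hf1 : f 1 = 1)
    (hW : ∀ x ∈ Set.Ioc (0:ℝ) 1, ∀ y ∈ Set.Ioc (0:ℝ) 1,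
      f x + f y - 1 ≤ f (x * y) ∧ f (x * y) ≤ f x * f y)
    (n : ℕ) (hn : 2 ≤ n) (x : Fin n → ℝ) (hx : ∀ i, x i ∈ Set.Ioc (0:ℝ) 1) :
    (∑ i, x i) - ((n : ℝ) - 1) ≤ f (∏ i, Ψ (x i)) ∧ f (∏ i, Ψ (x i)) ≤ ∏ i, x i := by
  set l : List ℝ := List.ofFn (fun i => Ψ (x i)) with hl
  have hne : l ≠ [] := by
    simp [hl, List.ofFn_eq_nil_iff]
    omega
  have hmem : ∀ y ∈ l, y ∈ Set.Ioc (0:ℝ) 1 := by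
    intro y hy
    rw [hl, List.mem_ofFn] at hy
    obtain ⟨i, rfl⟩ := hy
    exact hΨ_maps (hx i)
  obtain ⟨hprod, hlow, hhigh⟩ := weierstrass_list_aux f hf_maps hW l hne hmem
  have hprodeq : l.prod = ∏ i, Ψ (x i) := by rw [hl, List.prod_ofFn]
  have hmap : l.map f = List.ofFn (fun i => f (Ψ (x i))) := by
    rw [hl, List.map_ofFn]; rfl
  have hval : ∀ i, f (Ψ (x i)) = x i := fun i => hfΨ (x i) (hx i)
  have hsum : (l.map f).sum = ∑ i, x i := by
    rw [hmap, List.sum_ofFn]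
    exact Finset.sum_congr rfl fun i _ => hval i
  have hmprod : (l.map f).prod = ∏ i, x i := by
    rw [hmap, List.prod_ofFn]
    exact Finset.prod_congr rfl fun i _ => hval i
  have hlen : (l.length : ℝ) = n := by simp [hl]
  simp only [hprodeq, hsum, hmprod, hlen] at hlow hhigh
  exact ⟨hlow, hhigh⟩
end

section
/- Let f be a positive function of class C¹ on (0,1] with f(1) = 1, and suppose the function H_f(x) := x·f'(x) is non-decreasing on (0,1]. Then f is an l-Weierstrass function on (0,1], i.e. f(x·y) ≥ f(x) + f(y) - 1 for all x, y ∈ (0,1]. -/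
/-- If `f` is a positive `C¹` function on `(0,1]` with `f 1 = 1` (here `f'` is the derivative
of `f` on `(0,1]`, continuous there) such that `H_f x = x * f' x` is non-decreasing on
`(0,1]`, then `f` is an l-Weierstrass function on `(0,1]`. -/
theorem lWeierstrass_of_monotone_Hf_Ioc (f f' : ℝ → ℝ)
    (hderiv : ∀ x ∈ Set.Ioc (0:ℝ) 1, HasDerivWithinAt f (f' x) (Set.Ioc 0 1) x)
    (hcont : ContinuousOn f' (Set.Ioc 0 1))
    (hpos : ∀ x ∈ Set.Ioc (0:ℝ) 1, 0 < f x)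
    (hf1 : f 1 = 1)
    (hH : MonotoneOn (fun x => x * f' x) (Set.Ioc 0 1)) :
    ∀ x ∈ Set.Ioc (0:ℝ) 1, ∀ y ∈ Set.Ioc (0:ℝ) 1, f x + f y - 1 ≤ f (x * y) := by
  intro x hx y hy
  obtain ⟨hx0, hx1⟩ := hx
  obtain ⟨hy0, hy1⟩ := hy
  -- continuity of f on Ioc 0 1
  have hfc : ContinuousOn f (Set.Ioc 0 1) := fun t ht =>
    (hderiv t ht).continuousWithinAt
  -- the map t ↦ x * t maps Ioc 0 1 into Ioc 0 1
  have hmaps : ∀ t ∈ Set.Ioc (0:ℝ) 1, x * t ∈ Set.Ioc (0:ℝ) 1 := by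
    intro t ht
    exact ⟨mul_pos hx0 ht.1, le_trans (mul_le_mul hx1 ht.2 ht.1.le zero_le_one) (by norm_num)⟩
  set g : ℝ → ℝ := fun t => f (x * t) - f t with hg
  have hgd : ∀ t ∈ Set.Ioo (0:ℝ) 1, HasDerivAt g (f' (x * t) * x - f' t) t := by
    intro t ht
    have ht' : t ∈ Set.Ioc (0:ℝ) 1 := ⟨ht.1, ht.2.le⟩
    have hxt : x * t ∈ Set.Ioc (0:ℝ) 1 := hmaps t ht'
    have hdt : HasDerivAt f (f' t) t :=
      (hderiv t ht').hasDerivAt (Ioc_mem_nhds ht.1 ht.2)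
    have hxtI : x * t ∈ Set.Ioo (0:ℝ) 1 :=
      ⟨hxt.1, lt_of_le_of_lt (mul_le_of_le_one_left ht.1.le hx1) ht.2⟩
    have hdxt : HasDerivAt f (f' (x * t)) (x * t) :=
      (hderiv _ hxt).hasDerivAt (Ioc_mem_nhds hxtI.1 hxtI.2)
    have hinner : HasDerivAt (fun t : ℝ => x * t) x t := by
      simpa using (hasDerivAt_id t).const_mul x
    have hcomp : HasDerivAt (fun t => f (x * t)) (f' (x * t) * x) t :=
      hdxt.comp t hinner
    exact hcomp.sub hdt
  have hganti : AntitoneOn g (Set.Ioc 0 1) := by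
    apply antitoneOn_of_deriv_nonpos (convex_Ioc 0 1)
    · exact (hfc.comp (continuousOn_const.mul continuousOn_id) hmaps).sub hfc
    · intro t ht
      rw [interior_Ioc] at ht
      exact (hgd t ht).differentiableAt.differentiableWithinAt
    · intro t ht
      rw [interior_Ioc] at ht
      rw [(hgd t ht).deriv]
      have ht' : t ∈ Set.Ioc (0:ℝ) 1 := ⟨ht.1, ht.2.le⟩
      have hxt : x * t ∈ Set.Ioc (0:ℝ) 1 := hmaps t ht'
      have hHle : (x * t) * f' (x * t) ≤ t * f' t :=
        hH hxt ht' (mul_le_of_le_one_left ht.1.le hx1)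
      have h2 : t * (f' (x * t) * x) ≤ t * f' t := by nlinarith
      have := le_of_mul_le_mul_left h2 ht.1
      linarith
  have h1 : (1:ℝ) ∈ Set.Ioc (0:ℝ) 1 := ⟨one_pos, le_refl 1⟩
  have := hganti ⟨hy0, hy1⟩ h1 hy1
  simp only [hg, mul_one, hf1] at this
  linarith
end

section
/- Let f be a positive function of class C¹ on [1,∞) with f(1) = 1, and suppose the function H_f(x) := x·f'(x) is non-decreasing on [1,∞). Then f is an l-Weierstrass function on [1,∞), i.e. f(x·y) ≥ f(x) + f(y) - 1 for all x, y ∈ [1,∞). -/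
/-- If `f` is a positive `C¹` function on `[1,∞)` with `f 1 = 1` (here `f'` is the derivative
of `f` on `[1,∞)`, continuous there) such that `H_f x = x * f' x` is non-decreasing on
`[1,∞)`, then `f` is an l-Weierstrass function on `[1,∞)`. -/
theorem lWeierstrass_of_monotone_Hf_Ici (f f' : ℝ → ℝ)
    (hderiv : ∀ x ∈ Set.Ici (1:ℝ), HasDerivWithinAt f (f' x) (Set.Ici 1) x)
    (hcont : ContinuousOn f' (Set.Ici 1))
    (hpos : ∀ x ∈ Set.Ici (1:ℝ), 0 < f x)
    (hf1 : f 1 = 1)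
    (hH : MonotoneOn (fun x => x * f' x) (Set.Ici 1)) :
    ∀ x ∈ Set.Ici (1:ℝ), ∀ y ∈ Set.Ici (1:ℝ), f x + f y - 1 ≤ f (x * y) := by
  intro x hx y hy
  simp only [Set.mem_Ici] at hx hy
  have hfc : ContinuousOn f (Set.Ici 1) := fun t ht =>
    (hderiv t ht).continuousWithinAt
  have hmaps : ∀ t ∈ Set.Ici (1:ℝ), x * t ∈ Set.Ici (1:ℝ) := by
    intro t ht
    simp only [Set.mem_Ici] at ht ⊢
    nlinarith
  -- g t = f (x * t) - f t is monotone on [1, ∞)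
  have hg : MonotoneOn (fun t => f (x * t) - f t) (Set.Ici 1) := by
    apply monotoneOn_of_hasDerivWithinAt_nonneg (f' := fun t => f' (x * t) * x - f' t)
      (convex_Ici 1)
    · exact (hfc.comp (continuous_const.mul continuous_id).continuousOn hmaps).sub hfc
    · intro t ht
      rw [interior_Ici] at ht ⊢
      have ht1 : (1:ℝ) ≤ t := le_of_lt ht
      have h1 : HasDerivWithinAt (fun t => f (x * t)) (f' (x * t) * x) (Set.Ioi 1) t := by
        have := (hderiv (x * t) (hmaps t ht1)).comp t
          (((hasDerivAt_id t).const_mul x).hasDerivWithinAt (s := Set.Ioi 1))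
          (fun u hu => hmaps u (le_of_lt hu))
        simpa [mul_comm, Function.comp_def] using this
      exact h1.sub ((hderiv t ht1).mono Set.Ioi_subset_Ici_self)
    · intro t ht
      rw [interior_Ici] at ht
      have ht0 : (0:ℝ) < t := lt_trans one_pos ht
      have ht1 : (1:ℝ) ≤ t := le_of_lt ht
      have hle : t * f' t ≤ (x * t) * f' (x * t) :=
        hH ht1 (hmaps t ht1) (by nlinarith)
      have : 0 ≤ (x * t) * f' (x * t) - t * f' t := by linarith
      have h2 : 0 ≤ t * (f' (x * t) * x - f' t) := by nlinarith [this]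
      nlinarith
  have := hg (Set.mem_Ici.mpr le_rfl) (Set.mem_Ici.mpr hy) hy
  simp only [mul_one] at this
  linarith
end

section
/- Let f be a positive function of class C¹ on (0,1] with f(1) = 1, and suppose the function H_f(x) := x·f'(x) is strictly increasing on (0,1]. Then for all x, y ∈ (0,1) the inequality is strict: f(x·y) > f(x) + f(y) - 1. -/
/-- If `f` is a positive `C¹` function on `(0,1]` with `f 1 = 1` such that
`H_f x = x * f' x` is strictly increasing on `(0,1]`, then for all `x, y ∈ (0,1)` the
l-Weierstrass inequality is strict: `f (x * y) > f x + f y - 1`. -/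
theorem strict_lWeierstrass_of_strictMono_Hf_Ioc (f f' : ℝ → ℝ)
    (hderiv : ∀ x ∈ Set.Ioc (0:ℝ) 1, HasDerivWithinAt f (f' x) (Set.Ioc 0 1) x)
    (hcont : ContinuousOn f' (Set.Ioc 0 1))
    (hpos : ∀ x ∈ Set.Ioc (0:ℝ) 1, 0 < f x)
    (hf1 : f 1 = 1)
    (hH : StrictMonoOn (fun x => x * f' x) (Set.Ioc 0 1)) :
    ∀ x ∈ Set.Ioo (0:ℝ) 1, ∀ y ∈ Set.Ioo (0:ℝ) 1, f x + f y - 1 < f (x * y) := by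
  intro x hx y hy
  obtain ⟨hx0, hx1⟩ := hx
  obtain ⟨hy0, hy1⟩ := hy
  set g : ℝ → ℝ := fun t => f (t * y) - f t with hg
  have fcont : ContinuousOn f (Set.Ioc 0 1) := fun t ht =>
    (hderiv t ht).continuousWithinAt
  have hmaps : ∀ t ∈ Set.Icc x 1, t * y ∈ Set.Ioc (0:ℝ) 1 := by
    intro t ht
    exact ⟨mul_pos (lt_of_lt_of_le hx0 ht.1) hy0,
      le_trans (mul_le_one₀ ht.2 hy0.le hy1.le) le_rfl⟩
  have hsub : Set.Icc x 1 ⊆ Set.Ioc (0:ℝ) 1 := fun t ht => ⟨lt_of_lt_of_le hx0 ht.1, ht.2⟩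
  have gcont : ContinuousOn g (Set.Icc x 1) := by
    apply ContinuousOn.sub
    · exact fcont.comp ((continuous_id.mul continuous_const).continuousOn) hmaps
    · exact fcont.mono hsub
  have hderiv' : ∀ t ∈ Set.Ioo x 1, HasDerivAt g (f' (t * y) * y - f' t) t := by
    intro t ht
    have ht01 : t ∈ Set.Ioo (0:ℝ) 1 := ⟨lt_trans hx0 ht.1, ht.2⟩
    have hty : t * y ∈ Set.Ioo (0:ℝ) 1 :=
      ⟨mul_pos ht01.1 hy0, by nlinarith [ht01.1, ht01.2]⟩
    have hnhds : Set.Ioc (0:ℝ) 1 ∈ nhds t :=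
      Filter.mem_of_superset (isOpen_Ioo.mem_nhds ht01) Set.Ioo_subset_Ioc_self
    have hnhds' : Set.Ioc (0:ℝ) 1 ∈ nhds (t * y) :=
      Filter.mem_of_superset (isOpen_Ioo.mem_nhds hty) Set.Ioo_subset_Ioc_self
    have h1 : HasDerivAt f (f' t) t :=
      (hderiv t (Set.Ioo_subset_Ioc_self ht01)).hasDerivAt hnhds
    have h2 : HasDerivAt f (f' (t * y)) (t * y) :=
      (hderiv (t * y) (Set.Ioo_subset_Ioc_self hty)).hasDerivAt hnhds'
    have h3 : HasDerivAt (fun s : ℝ => s * y) y t := hasDerivAt_mul_const y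
    exact (h2.comp t h3).sub h1
  have hneg : ∀ t ∈ Set.Ioo x 1, f' (t * y) * y - f' t < 0 := by
    intro t ht
    have ht01 : t ∈ Set.Ioc (0:ℝ) 1 := ⟨lt_trans hx0 ht.1, ht.2.le⟩
    have hty : t * y ∈ Set.Ioc (0:ℝ) 1 :=
      ⟨mul_pos ht01.1 hy0, mul_le_one₀ ht01.2 hy0.le hy1.le⟩
    have hlt : t * y < t := by
      have := mul_lt_mul_of_pos_left hy1 ht01.1
      simpa using this
    have := hH hty ht01 hlt
    simp only at this
    have ht0 : (0:ℝ) < t := ht01.1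
    nlinarith
  have hanti : StrictAntiOn g (Set.Icc x 1) := by
    apply StrictAntiOn.mono (s := Set.Icc x 1) ?_ (le_refl _)
    apply strictAntiOn_of_deriv_neg (convex_Icc x 1) gcont
    intro t ht
    rw [interior_Icc] at ht
    rw [(hderiv' t ht).deriv]
    exact hneg t ht
  have hkey : g 1 < g x := hanti ⟨le_refl x, hx1.le⟩ ⟨hx1.le, le_refl 1⟩ hx1
  simp only [hg, one_mul, hf1] at hkey
  linarith
end

section
/- Let f be a positive function of class C¹ on (0,1] with f(1) = 1, and suppose the function H_f(x) := x·f'(x) is non-increasing on (0,1]. Then f is an r-Weierstrass function on (0,1], i.e. f(x·y) ≤ f(x) + f(y) - 1 for all x, y ∈ (0,1]. -/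
/-- If `f` is a positive `C¹` function on `(0,1]` with `f 1 = 1` such that
`H_f x = x * f' x` is non-increasing on `(0,1]`, then `f` is an r-Weierstrass function
on `(0,1]`: `f (x * y) ≤ f x + f y - 1` for all `x, y ∈ (0,1]`. -/
theorem rWeierstrass_of_antitone_Hf_Ioc (f f' : ℝ → ℝ)
    (hderiv : ∀ x ∈ Set.Ioc (0:ℝ) 1, HasDerivWithinAt f (f' x) (Set.Ioc 0 1) x)
    (hcont : ContinuousOn f' (Set.Ioc 0 1))
    (hpos : ∀ x ∈ Set.Ioc (0:ℝ) 1, 0 < f x)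
    (hf1 : f 1 = 1)
    (hH : AntitoneOn (fun x => x * f' x) (Set.Ioc 0 1)) :
    ∀ x ∈ Set.Ioc (0:ℝ) 1, ∀ y ∈ Set.Ioc (0:ℝ) 1, f (x * y) ≤ f x + f y - 1 := by
  have hfc : ContinuousOn f (Set.Ioc 0 1) := fun t ht => (hderiv t ht).continuousWithinAt
  rintro x ⟨hx0, hx1⟩ y ⟨hy0, hy1⟩
  set φ : ℝ → ℝ := fun t => f t - f (t * y) with hφ
  have hsub : Set.Icc x 1 ⊆ Set.Ioc (0:ℝ) 1 := fun t ht => ⟨lt_of_lt_of_le hx0 ht.1, ht.2⟩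
  have hmul : ∀ t ∈ Set.Ioc (0:ℝ) 1, t * y ∈ Set.Ioc (0:ℝ) 1 := fun t ht =>
    ⟨mul_pos ht.1 hy0, mul_le_one₀ ht.2 hy0.le hy1⟩
  have hφc : ContinuousOn φ (Set.Icc x 1) := by
    apply ContinuousOn.sub (hfc.mono hsub)
    exact hfc.comp (continuousOn_id.mul continuousOn_const) (fun t ht => hmul t (hsub ht))
  have hd : ∀ t ∈ Set.Ioo x 1, HasDerivAt φ (f' t - f' (t * y) * y) t := by
    intro t ht
    have ht' : t ∈ Set.Ioc (0:ℝ) 1 := ⟨hx0.trans ht.1, ht.2.le⟩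
    have hnb : Set.Ioc (0:ℝ) 1 ∈ nhds t :=
      mem_nhds_iff.2 ⟨Set.Ioo 0 1, Set.Ioo_subset_Ioc_self, isOpen_Ioo, ⟨ht'.1, ht.2⟩⟩
    have h1 : HasDerivAt f (f' t) t := (hderiv t ht').hasDerivAt hnb
    have hty : t * y ∈ Set.Ioo (0:ℝ) 1 := ⟨mul_pos ht'.1 hy0,
      lt_of_le_of_lt (mul_le_of_le_one_right (hx0.trans ht.1).le hy1) ht.2⟩
    have hnb2 : Set.Ioc (0:ℝ) 1 ∈ nhds (t * y) :=
      mem_nhds_iff.2 ⟨Set.Ioo 0 1, Set.Ioo_subset_Ioc_self, isOpen_Ioo, hty⟩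
    have h2 : HasDerivAt f (f' (t * y)) (t * y) :=
      (hderiv _ (Set.Ioo_subset_Ioc_self hty)).hasDerivAt hnb2
    have h3 : HasDerivAt (fun t => f (t * y)) (f' (t * y) * y) t := by
      have := h2.comp t ((hasDerivAt_id t).mul_const y)
      simpa [Function.comp_def] using this
    exact h1.sub h3
  have hanti : AntitoneOn φ (Set.Icc x 1) := by
    apply antitoneOn_of_deriv_nonpos (convex_Icc x 1) hφc
    · rw [interior_Icc]
      intro t ht
      exact (hd t ht).differentiableAt.differentiableWithinAt
    · rw [interior_Icc]
      intro t ht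
      rw [(hd t ht).deriv]
      have ht' : t ∈ Set.Ioc (0:ℝ) 1 := ⟨hx0.trans ht.1, ht.2.le⟩
      have := hH (hmul t ht') ht' (mul_le_of_le_one_right (hx0.trans ht.1).le hy1)
      simp only at this
      have ht0 : 0 < t := hx0.trans ht.1
      nlinarith [mul_pos ht0 hy0]
  have := hanti ⟨le_refl x, hx1⟩ ⟨hx1, le_refl 1⟩ hx1
  simp only [hφ, one_mul, hf1] at this
  linarith
end

section
/- Let f be a positive function of class C² on (0,1] with f(1) = 1, and suppose that G_f(x) := f'(x)/x + f''(x) is non-negative for all x ∈ (0,1]. Then f is an l-Weierstrass function on (0,1], i.e. f(x·y) ≥ f(x) + f(y) - 1 for all x, y ∈ (0,1]. -/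
/-- If `f` is a positive `C²` function on `(0,1]` with `f 1 = 1` (with first derivative `f'`
and second derivative `f''` on `(0,1]`, `f''` continuous there) such that
`G_f x = f' x / x + f'' x` is non-negative on `(0,1]`, then `f` is an l-Weierstrass
function on `(0,1]`. -/
theorem lWeierstrass_of_nonneg_Gf_Ioc (f f' f'' : ℝ → ℝ)
    (hderiv : ∀ x ∈ Set.Ioc (0:ℝ) 1, HasDerivWithinAt f (f' x) (Set.Ioc 0 1) x)
    (hderiv' : ∀ x ∈ Set.Ioc (0:ℝ) 1, HasDerivWithinAt f' (f'' x) (Set.Ioc 0 1) x)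
    (hcont : ContinuousOn f'' (Set.Ioc 0 1))
    (hpos : ∀ x ∈ Set.Ioc (0:ℝ) 1, 0 < f x)
    (hf1 : f 1 = 1)
    (hG : ∀ x ∈ Set.Ioc (0:ℝ) 1, 0 ≤ f' x / x + f'' x) :
    ∀ x ∈ Set.Ioc (0:ℝ) 1, ∀ y ∈ Set.Ioc (0:ℝ) 1, f x + f y - 1 ≤ f (x * y) := by
  have hmemnhds : ∀ t ∈ Set.Ioo (0:ℝ) 1, Set.Ioc (0:ℝ) 1 ∈ nhds t := by
    intro t ht
    exact mem_nhds_iff.2 ⟨Set.Ioo 0 1, Set.Ioo_subset_Ioc_self, isOpen_Ioo, ht⟩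
  have hcf : ContinuousOn f (Set.Ioc 0 1) :=
    fun t ht => (hderiv t ht).continuousWithinAt
  have hcf' : ContinuousOn f' (Set.Ioc 0 1) :=
    fun t ht => (hderiv' t ht).continuousWithinAt
  -- h(t) = t * f'(t) is monotone on Ioc 0 1
  have hmono : MonotoneOn (fun t => t * f' t) (Set.Ioc (0:ℝ) 1) := by
    apply monotoneOn_of_deriv_nonneg (convex_Ioc 0 1)
    · exact ContinuousOn.mul continuousOn_id hcf'
    · intro t ht
      rw [interior_Ioc] at ht
      have h1 : HasDerivAt f' (f'' t) t :=
        (hderiv' t (Set.Ioo_subset_Ioc_self ht)).hasDerivAt (hmemnhds t ht)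
      exact ((hasDerivAt_id t).mul h1).differentiableAt.differentiableWithinAt
    · intro t ht
      rw [interior_Ioc] at ht
      have h1 : HasDerivAt f' (f'' t) t :=
        (hderiv' t (Set.Ioo_subset_Ioc_self ht)).hasDerivAt (hmemnhds t ht)
      have h2 : HasDerivAt (fun t => t * f' t) (1 * f' t + t * f'' t) t :=
        (hasDerivAt_id t).mul h1
      rw [h2.deriv]
      have h3 := hG t (Set.Ioo_subset_Ioc_self ht)
      have h4 : (0:ℝ) < t := ht.1
      have h5 : f' t / t * t = f' t := div_mul_cancel₀ _ (ne_of_gt h4)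
      nlinarith [mul_nonneg h3 h4.le]
  intro x hx y hy
  -- g(t) = f t - f (x * t) is monotone on Ioc 0 1
  have hmaps : ∀ t ∈ Set.Ioc (0:ℝ) 1, x * t ∈ Set.Ioc (0:ℝ) 1 :=
    fun t ht => ⟨mul_pos hx.1 ht.1, mul_le_one₀ hx.2 ht.1.le ht.2⟩
  have gmono : MonotoneOn (fun t => f t - f (x * t)) (Set.Ioc (0:ℝ) 1) := by
    apply monotoneOn_of_deriv_nonneg (convex_Ioc 0 1)
    · exact hcf.sub (hcf.comp (continuousOn_const.mul continuousOn_id) hmaps)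
    · intro t ht
      rw [interior_Ioc] at ht
      have hxt : x * t ∈ Set.Ioo (0:ℝ) 1 :=
        ⟨mul_pos hx.1 ht.1, lt_of_le_of_lt (mul_le_of_le_one_left ht.1.le hx.2) ht.2⟩
      have h1 : HasDerivAt f (f' t) t :=
        (hderiv t (Set.Ioo_subset_Ioc_self ht)).hasDerivAt (hmemnhds t ht)
      have h2 : HasDerivAt f (f' (x * t)) (x * t) :=
        (hderiv (x * t) (Set.Ioo_subset_Ioc_self hxt)).hasDerivAt (hmemnhds _ hxt)
      have hg : HasDerivAt (fun t : ℝ => x * t) x t := by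
        simpa using (hasDerivAt_id t).const_mul x
      have h3 : HasDerivAt (fun t => f (x * t)) (f' (x * t) * x) t := h2.comp t hg
      exact (h1.sub h3).differentiableAt.differentiableWithinAt
    · intro t ht
      rw [interior_Ioc] at ht
      have hxt : x * t ∈ Set.Ioo (0:ℝ) 1 :=
        ⟨mul_pos hx.1 ht.1, lt_of_le_of_lt (mul_le_of_le_one_left ht.1.le hx.2) ht.2⟩
      have h1 : HasDerivAt f (f' t) t :=
        (hderiv t (Set.Ioo_subset_Ioc_self ht)).hasDerivAt (hmemnhds t ht)
      have h2 : HasDerivAt f (f' (x * t)) (x * t) :=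
        (hderiv (x * t) (Set.Ioo_subset_Ioc_self hxt)).hasDerivAt (hmemnhds _ hxt)
      have hg : HasDerivAt (fun t : ℝ => x * t) x t := by
        simpa using (hasDerivAt_id t).const_mul x
      have h3 : HasDerivAt (fun t => f (x * t)) (f' (x * t) * x) t := h2.comp t hg
      rw [(show HasDerivAt (fun t => f t - f (x * t)) (f' t - f' (x * t) * x) t from h1.sub h3).deriv]
      have hm : (x * t) * f' (x * t) ≤ t * f' t :=
        hmono (Set.Ioo_subset_Ioc_self hxt) (Set.Ioo_subset_Ioc_self ht)
          (mul_le_of_le_one_left ht.1.le hx.2)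
      have h4 : (0:ℝ) < t := ht.1
      nlinarith
  have key : f y - f (x * y) ≤ f 1 - f (x * 1) :=
    gmono hy (Set.mem_Ioc.2 ⟨one_pos, le_refl 1⟩) hy.2
  rw [mul_one, hf1] at key
  linarith
end

section
/- Let f and g be functions of class C¹ mapping (0,1] into (0,1], with f(1) = g(1) = 1, with f, g and g' non-decreasing on (0,1], and suppose x ↦ x·f'(x) is non-decreasing on (0,1]. Then x ↦ x·(g∘f)'(x) is non-decreasing on (0,1], and hence g∘f is an l-Weierstrass function on (0,1]: (g∘f)(x·y) ≥ (g∘f)(x) + (g∘f)(y) - 1 for all x, y ∈ (0,1]. If additionally f and g are submultiplicative on (0,1], then g∘f is a Weierstrass function on (0,1]: (g∘f)(x) + (g∘f)(y) - 1 ≤ (g∘f)(x·y) ≤ (g∘f)(x)·(g∘f)(y) for all x, y ∈ (0,1]. -/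
open Set Filter Topology

/-- The derivative (within `(0,1]`) of a function monotone on `(0,1]` is nonnegative there. -/
lemma aux_deriv_nonneg {f f' : ℝ → ℝ}
    (hfderiv : ∀ x ∈ Set.Ioc (0:ℝ) 1, HasDerivWithinAt f (f' x) (Set.Ioc 0 1) x)
    (hfmono : MonotoneOn f (Set.Ioc 0 1)) :
    ∀ x ∈ Set.Ioc (0:ℝ) 1, 0 ≤ f' x := by
  intro x hx
  have h := hasDerivWithinAt_iff_tendsto_slope.1 (hfderiv x hx)
  have hsub : Set.Ioo (0:ℝ) x ⊆ Set.Ioc 0 1 \ {x} := fun z hz =>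
    ⟨⟨hz.1, hz.2.le.trans hx.2⟩, ne_of_lt hz.2⟩
  have hne : (𝓝[Set.Ioo (0:ℝ) x] x).NeBot := by
    apply mem_closure_iff_nhdsWithin_neBot.1
    rw [closure_Ioo (ne_of_lt hx.1)]
    exact ⟨hx.1.le, le_rfl⟩
  have h2 : Tendsto (slope f x) (𝓝[Set.Ioo (0:ℝ) x] x) (𝓝 (f' x)) :=
    h.mono_left (nhdsWithin_mono x hsub)
  refine ge_of_tendsto h2 (Filter.eventually_of_mem self_mem_nhdsWithin ?_)
  intro z hz
  have hz1 : z ∈ Set.Ioc (0:ℝ) 1 := ⟨hz.1, hz.2.le.trans hx.2⟩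
  have hle : f z ≤ f x := hfmono hz1 hx hz.2.le
  rw [slope_def_field]
  have : z - x < 0 := by linarith [hz.2]
  rw [div_nonneg_iff]
  right
  constructor <;> [linarith; linarith]

/-- Let `f, g` be `C¹` functions mapping `(0,1]` into `(0,1]` with `f 1 = g 1 = 1`,
with `f`, `g` and `g'` non-decreasing on `(0,1]`, and with `x ↦ x * f' x` non-decreasing
on `(0,1]`. Then `x ↦ x * (g ∘ f)' x` (i.e. `x ↦ x * (g' (f x) * f' x)`) is non-decreasing
on `(0,1]`, so `g ∘ f` is an l-Weierstrass function on `(0,1]`; and if moreover `f` and `g`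
are submultiplicative on `(0,1]`, then `g ∘ f` is a Weierstrass function on `(0,1]`. -/
theorem weierstrass_of_composition (f f' g g' : ℝ → ℝ)
    (hfderiv : ∀ x ∈ Set.Ioc (0:ℝ) 1, HasDerivWithinAt f (f' x) (Set.Ioc 0 1) x)
    (hgderiv : ∀ x ∈ Set.Ioc (0:ℝ) 1, HasDerivWithinAt g (g' x) (Set.Ioc 0 1) x)
    (hfcont : ContinuousOn f' (Set.Ioc 0 1))
    (hgcont : ContinuousOn g' (Set.Ioc 0 1))
    (hf_maps : Set.MapsTo f (Set.Ioc 0 1) (Set.Ioc 0 1))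
    (hg_maps : Set.MapsTo g (Set.Ioc 0 1) (Set.Ioc 0 1))
    (hf1 : f 1 = 1) (hg1 : g 1 = 1)
    (hfmono : MonotoneOn f (Set.Ioc 0 1))
    (hgmono : MonotoneOn g (Set.Ioc 0 1))
    (hg'mono : MonotoneOn g' (Set.Ioc 0 1))
    (hH : MonotoneOn (fun x => x * f' x) (Set.Ioc 0 1)) :
    MonotoneOn (fun x => x * (g' (f x) * f' x)) (Set.Ioc 0 1) ∧
      (∀ x ∈ Set.Ioc (0:ℝ) 1, ∀ y ∈ Set.Ioc (0:ℝ) 1,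
        g (f x) + g (f y) - 1 ≤ g (f (x * y))) ∧
      ((∀ x ∈ Set.Ioc (0:ℝ) 1, ∀ y ∈ Set.Ioc (0:ℝ) 1, f (x * y) ≤ f x * f y) →
       (∀ x ∈ Set.Ioc (0:ℝ) 1, ∀ y ∈ Set.Ioc (0:ℝ) 1, g (x * y) ≤ g x * g y) →
        ∀ x ∈ Set.Ioc (0:ℝ) 1, ∀ y ∈ Set.Ioc (0:ℝ) 1,
          g (f x) + g (f y) - 1 ≤ g (f (x * y)) ∧ g (f (x * y)) ≤ g (f x) * g (f y)) := by
  have hf'0 : ∀ x ∈ Set.Ioc (0:ℝ) 1, 0 ≤ f' x := aux_deriv_nonneg hfderiv hfmono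
  have hg'0 : ∀ x ∈ Set.Ioc (0:ℝ) 1, 0 ≤ g' x := aux_deriv_nonneg hgderiv hgmono
  -- Part 1: monotonicity of x ↦ x * (g' (f x) * f' x)
  have hM : MonotoneOn (fun x => x * (g' (f x) * f' x)) (Set.Ioc 0 1) := by
    intro a ha b hb hab
    have h1 : a * f' a ≤ b * f' b := hH ha hb hab
    have h2 : g' (f a) ≤ g' (f b) := hg'mono (hf_maps ha) (hf_maps hb) (hfmono ha hb hab)
    have h3 : 0 ≤ a * f' a := mul_nonneg ha.1.le (hf'0 a ha)
    have h4 : 0 ≤ g' (f a) := hg'0 _ (hf_maps ha)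
    have h5 : 0 ≤ g' (f b) := hg'0 _ (hf_maps hb)
    calc a * (g' (f a) * f' a) = g' (f a) * (a * f' a) := by ring
    _ ≤ g' (f b) * (b * f' b) := mul_le_mul h2 h1 h3 h5
    _ = b * (g' (f b) * f' b) := by ring
  -- derivative of h := g ∘ f within Ioc
  set H' : ℝ → ℝ := fun x => g' (f x) * f' x with hH'def
  have hHD : ∀ x ∈ Set.Ioc (0:ℝ) 1,
      HasDerivWithinAt (fun x => g (f x)) (H' x) (Set.Ioc 0 1) x := by
    intro x hx
    exact (hgderiv (f x) (hf_maps hx)).comp x (hfderiv x hx) hf_maps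
  have hHDat : ∀ x ∈ Set.Ioo (0:ℝ) 1, HasDerivAt (fun x => g (f x)) (H' x) x := by
    intro x hx
    exact (hHD x (Set.Ioo_subset_Ioc_self hx)).hasDerivAt (Ioc_mem_nhds hx.1 hx.2)
  -- Part 2: l-Weierstrass
  have hlW : ∀ x ∈ Set.Ioc (0:ℝ) 1, ∀ y ∈ Set.Ioc (0:ℝ) 1,
      g (f x) + g (f y) - 1 ≤ g (f (x * y)) := by
    intro x hx y hy
    -- φ(t) = g(f(t*y)) - g(f t) is antitone on Ioc 0 1
    have hconvex : Convex ℝ (Set.Ioc (0:ℝ) 1) := convex_Ioc 0 1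
    have hmem : ∀ t ∈ Set.Ioc (0:ℝ) 1, t * y ∈ Set.Ioc (0:ℝ) 1 := by
      intro t ht
      exact ⟨mul_pos ht.1 hy.1, by nlinarith [ht.2, hy.2, ht.1, hy.1]⟩
    have hcont : ContinuousOn (fun t => g (f (t * y)) - g (f t)) (Set.Ioc 0 1) := by
      intro t ht
      have c1 : ContinuousWithinAt (fun t => g (f t)) (Set.Ioc 0 1) (t * y) :=
        (hHD _ (hmem t ht)).continuousWithinAt
      have c2 : ContinuousWithinAt (fun t => t * y) (Set.Ioc (0:ℝ) 1) t :=
        (continuous_mul_right y).continuousWithinAt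
      have c3 : ContinuousWithinAt ((fun s => g (f s)) ∘ (fun t => t * y)) (Set.Ioc 0 1) t :=
        ContinuousWithinAt.comp_of_eq c1 c2 (fun z hz => hmem z hz) rfl
      exact c3.sub (hHD t ht).continuousWithinAt
    have hderφ : ∀ t ∈ interior (Set.Ioc (0:ℝ) 1),
        HasDerivWithinAt (fun t => g (f (t * y)) - g (f t)) (H' (t * y) * y - H' t)
          (interior (Set.Ioc (0:ℝ) 1)) t := by
      intro t ht
      rw [interior_Ioc] at ht
      have htyo : t * y ∈ Set.Ioo (0:ℝ) 1 := by
        constructor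
        · exact mul_pos ht.1 hy.1
        · nlinarith [ht.2, hy.2, ht.1, hy.1]
      have d1 := HasDerivAt.comp t (hHDat _ htyo) (hasDerivAt_mul_const y)
      have d2 : HasDerivAt (fun t => g (f t)) (H' t) t :=
        hHDat t ht
      rw [interior_Ioc]
      exact (d1.sub d2).hasDerivWithinAt
    have hnonpos : ∀ t ∈ interior (Set.Ioc (0:ℝ) 1), H' (t * y) * y - H' t ≤ 0 := by
      intro t ht
      rw [interior_Ioc] at ht
      have ht' : t ∈ Set.Ioc (0:ℝ) 1 := Set.Ioo_subset_Ioc_self ht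
      have hty : t * y ∈ Set.Ioc (0:ℝ) 1 := hmem t ht'
      have hle : t * y ≤ t := by nlinarith [hy.2, ht.1]
      have htpos : (0:ℝ) < t := ht.1
      have hmono := hM hty ht' hle
      simp only [hH'def]
      simp only at hmono
      have h6 : g' (f (t * y)) * f' (t * y) * y * t ≤ g' (f t) * f' t * t := by nlinarith [hmono]
      have h7 := le_of_mul_le_mul_right h6 htpos
      linarith
    have hanti : AntitoneOn (fun t => g (f (t * y)) - g (f t)) (Set.Ioc 0 1) :=
      antitoneOn_of_hasDerivWithinAt_nonpos hconvex hcont hderφ hnonpos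
    have h1 := hanti hx (by norm_num : (1:ℝ) ∈ Set.Ioc (0:ℝ) 1) hx.2
    simp only [one_mul, hf1, hg1] at h1
    -- h1 : g (f y) - 1 ≤ g (f (x*y)) - g (f x)
    have hxy : x * y = x * y := rfl
    have : g (f (1 * y)) = g (f y) := by rw [one_mul]
    linarith [h1]
  refine ⟨hM, hlW, ?_⟩
  intro hfsub hgsub x hx y hy
  refine ⟨hlW x hx y hy, ?_⟩
  have hfx := hf_maps hx
  have hfy := hf_maps hy
  have hfxy := hf_maps (⟨mul_pos hx.1 hy.1, by nlinarith [hx.2, hy.2, hx.1, hy.1]⟩ :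
    x * y ∈ Set.Ioc (0:ℝ) 1)
  have h1 : f (x * y) ≤ f x * f y := hfsub x hx y hy
  have h2 : f x * f y ∈ Set.Ioc (0:ℝ) 1 :=
    ⟨mul_pos hfx.1 hfy.1, by nlinarith [hfx.2, hfy.2, hfx.1, hfy.1]⟩
  calc g (f (x * y)) ≤ g (f x * f y) := hgmono hfxy h2 h1
  _ ≤ g (f x) * g (f y) := hgsub (f x) hfx (f y) hfy
end

section
/- Let f be a function of class C¹ mapping (0,1] into (0,1] with f(1) = 1, non-decreasing on (0,1], submultiplicative on (0,1], and with x ↦ x·f'(x) non-decreasing on (0,1] (so that f is a Weierstrass function on (0,1]). Then, for every real α > 1, the function F_α(x) := f(x)^α is a Weierstrass function on (0,1]: F_α(x) + F_α(y) - 1 ≤ F_α(x·y) ≤ F_α(x)·F_α(y) for all x, y ∈ (0,1]. -/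
open Set

/-- A generic "Weierstrass lower bound" lemma: if `g` is continuous on `(0,1]`,
differentiable on `(0,1)` with derivative `g'`, `g 1 = 1`, and
`y * g' (x*y) ≤ g' x` for `x ∈ (0,1)`, `y ∈ (0,1]`, then
`g x + g y - 1 ≤ g (x*y)` on `(0,1]`. -/
lemma weier_lower_aux (g g' : ℝ → ℝ)
    (hgc : ContinuousOn g (Set.Ioc 0 1))
    (hgd : ∀ x ∈ Set.Ioo (0:ℝ) 1, HasDerivAt g (g' x) x)
    (hg1 : g 1 = 1)
    (hkey : ∀ x ∈ Set.Ioo (0:ℝ) 1, ∀ y ∈ Set.Ioc (0:ℝ) 1, y * g' (x * y) ≤ g' x) :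
    ∀ x ∈ Set.Ioc (0:ℝ) 1, ∀ y ∈ Set.Ioc (0:ℝ) 1, g x + g y - 1 ≤ g (x * y) := by
  intro x hx y hy
  have hmaps : Set.MapsTo (fun x : ℝ => x * y) (Set.Ioc 0 1) (Set.Ioc 0 1) := by
    intro z hz
    exact ⟨mul_pos hz.1 hy.1, mul_le_one₀ hz.2 hy.1.le hy.2⟩
  have hanti : AntitoneOn (fun x => g (x * y) - g x) (Set.Ioc 0 1) := by
    apply antitoneOn_of_hasDerivWithinAt_nonpos (f' := fun x => g' (x * y) * y - g' x)
      (convex_Ioc 0 1)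
    · exact (hgc.comp (continuous_mul_right y).continuousOn hmaps).sub hgc
    · intro z hz
      rw [interior_Ioc] at hz ⊢
      have hzy : z * y ∈ Set.Ioo (0:ℝ) 1 :=
        ⟨mul_pos hz.1 hy.1, lt_of_le_of_lt (mul_le_of_le_one_right hz.1.le hy.2) hz.2⟩
      exact (((hgd _ hzy).comp z (hasDerivAt_mul_const y)).sub (hgd z hz)).hasDerivWithinAt
    · intro z hz
      rw [interior_Ioc] at hz
      have hzy : z * y ∈ Set.Ioo (0:ℝ) 1 :=
        ⟨mul_pos hz.1 hy.1, lt_of_le_of_lt (mul_le_of_le_one_right hz.1.le hy.2) hz.2⟩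
      have := hkey z hz y hy
      linarith [hkey z hz y hy]
  have h1 : (1:ℝ) ∈ Set.Ioc (0:ℝ) 1 := ⟨one_pos, le_refl 1⟩
  have := hanti hx h1 hx.2
  simp only [one_mul, hg1] at this
  linarith

/-- If `f` is a `C¹` function mapping `(0,1]` into `(0,1]` with `f 1 = 1`, non-decreasing
and submultiplicative on `(0,1]`, and with `x ↦ x * f' x` non-decreasing on `(0,1]`
(so `f` is a Weierstrass function on `(0,1]`), then for every real `α > 1` the function
`F_α x = f x ^ α` is a Weierstrass function on `(0,1]`. -/
theorem weierstrass_rpow (f f' : ℝ → ℝ)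
    (hderiv : ∀ x ∈ Set.Ioc (0:ℝ) 1, HasDerivWithinAt f (f' x) (Set.Ioc 0 1) x)
    (hcont : ContinuousOn f' (Set.Ioc 0 1))
    (hf_maps : Set.MapsTo f (Set.Ioc 0 1) (Set.Ioc 0 1))
    (hf1 : f 1 = 1)
    (hfmono : MonotoneOn f (Set.Ioc 0 1))
    (hsub : ∀ x ∈ Set.Ioc (0:ℝ) 1, ∀ y ∈ Set.Ioc (0:ℝ) 1, f (x * y) ≤ f x * f y)
    (hH : MonotoneOn (fun x => x * f' x) (Set.Ioc 0 1))
    (α : ℝ) (hα : 1 < α) :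
    ∀ x ∈ Set.Ioc (0:ℝ) 1, ∀ y ∈ Set.Ioc (0:ℝ) 1,
      f x ^ α + f y ^ α - 1 ≤ f (x * y) ^ α ∧ f (x * y) ^ α ≤ f x ^ α * f y ^ α := by
  have hα0 : (0:ℝ) ≤ α := by linarith
  -- f is differentiable (in the full sense) at interior points
  have hdA : ∀ z ∈ Set.Ioo (0:ℝ) 1, HasDerivAt f (f' z) z := by
    intro z hz
    exact (hderiv z (Set.Ioo_subset_Ioc_self hz)).hasDerivAt (Ioc_mem_nhds hz.1 hz.2)
  -- f' is nonnegative at interior points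
  have hf'nonneg : ∀ z ∈ Set.Ioo (0:ℝ) 1, 0 ≤ f' z := by
    intro z hz
    have hd := (hasDerivAt_iff_tendsto_slope).1 (hdA z hz)
    have hd' : Filter.Tendsto (slope f z) (nhdsWithin z (Set.Ioi z)) (nhds (f' z)) :=
      hd.mono_left (nhdsWithin_mono z (fun u hu => (ne_of_gt hu : u ≠ z)))
    refine ge_of_tendsto hd' ?_
    filter_upwards [Ioo_mem_nhdsGT_of_mem (⟨le_refl z, hz.2⟩ : z ∈ Set.Ico z 1)] with u hu
    have hmem : u ∈ Set.Ioc (0:ℝ) 1 := ⟨lt_trans hz.1 hu.1, hu.2.le⟩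
    have hfz : f z ≤ f u := hfmono (Set.Ioo_subset_Ioc_self hz) hmem hu.1.le
    rw [slope_def_field]
    exact div_nonneg (by linarith) (by linarith [hu.1])
  -- continuity of f on Ioc
  have hfc : ContinuousOn f (Set.Ioc 0 1) := fun z hz => (hderiv z hz).continuousWithinAt
  intro x hx y hy
  have hxy : x * y ∈ Set.Ioc (0:ℝ) 1 :=
    ⟨mul_pos hx.1 hy.1, mul_le_one₀ hx.2 hy.1.le hy.2⟩
  have fx := hf_maps hx
  have fy := hf_maps hy
  have fxy := hf_maps hxy
  constructor
  · -- lower bound via the generic lemma applied to g = f ^ α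
    refine weier_lower_aux (fun z => f z ^ α) (fun z => f' z * α * f z ^ (α - 1)) ?_ ?_ ?_ ?_
      x hx y hy
    · exact hfc.rpow_const (fun z hz => Or.inl (ne_of_gt (hf_maps hz).1))
    · intro z hz
      exact (hdA z hz).rpow_const (Or.inl (ne_of_gt (hf_maps (Set.Ioo_subset_Ioc_self hz)).1))
    · simp [hf1]
    · intro z hz w hw
      have hzy : z * w ∈ Set.Ioc (0:ℝ) 1 :=
        ⟨mul_pos hz.1 hw.1, mul_le_one₀ hz.2.le hw.1.le hw.2⟩
      have hzy' : z * w ∈ Set.Ioo (0:ℝ) 1 :=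
        ⟨hzy.1, lt_of_le_of_lt (mul_le_of_le_one_right hz.1.le hw.2) hz.2⟩
      have hz' : z ∈ Set.Ioc (0:ℝ) 1 := Set.Ioo_subset_Ioc_self hz
      have hle : z * w ≤ z := mul_le_of_le_one_right hz.1.le hw.2
      have h1 : (z * w) * f' (z * w) ≤ z * f' z := hH hzy hz' hle
      have hfle : f (z * w) ≤ f z := hfmono hzy hz' hle
      have h2 : α * f (z * w) ^ (α - 1) ≤ α * f z ^ (α - 1) := by
        have := Real.rpow_le_rpow (hf_maps hzy).1.le hfle (by linarith : (0:ℝ) ≤ α - 1)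
        nlinarith [this, hα0]
      have h2n : 0 ≤ α * f (z * w) ^ (α - 1) :=
        mul_nonneg (by linarith) (Real.rpow_nonneg (hf_maps hzy).1.le _)
      have hb : 0 ≤ z * f' z := mul_nonneg hz.1.le (hf'nonneg z hz)
      have key : ((z * w) * f' (z * w)) * (α * f (z * w) ^ (α - 1)) ≤
          (z * f' z) * (α * f z ^ (α - 1)) := mul_le_mul h1 h2 h2n hb
      apply le_of_mul_le_mul_left _ hz.1
      calc z * (w * (f' (z * w) * α * f (z * w) ^ (α - 1)))
          = ((z * w) * f' (z * w)) * (α * f (z * w) ^ (α - 1)) := by ring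
        _ ≤ (z * f' z) * (α * f z ^ (α - 1)) := key
        _ = z * (f' z * α * f z ^ (α - 1)) := by ring
  · -- upper bound
    have h1 : f (x * y) ≤ f x * f y := hsub x hx y hy
    calc f (x * y) ^ α ≤ (f x * f y) ^ α := Real.rpow_le_rpow fxy.1.le h1 hα0
      _ = f x ^ α * f y ^ α := Real.mul_rpow fx.1.le fy.1.le
end

section
/- For all x, y ∈ (0,1]: x + y - 1 ≤ (4/π)·arctan( tan(π·x/4) · tan(π·y/4) ) ≤ x·y. -/
open Real Set

private lemma aux_one_div_cos_sq {u : ℝ} (h : Real.cos u ≠ 0) :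
    1 / Real.cos u ^ 2 = Real.tan u ^ 2 + 1 := by
  rw [Real.tan_eq_sin_div_cos]
  field_simp
  exact (Real.sin_sq_add_cos_sq u).symm

private lemma aux_hasDerivAt (b : ℝ) {u : ℝ} (h1 : -(Real.pi/2) < u) (h2 : u < Real.pi/2) :
    HasDerivAt (fun u => Real.arctan (b * Real.tan u))
      (1 / (1 + (b * Real.tan u) ^ 2) * (b * (1 / Real.cos u ^ 2))) u := by
  have hc : Real.cos u ≠ 0 := (Real.cos_pos_of_mem_Ioo ⟨h1, h2⟩).ne'
  exact (Real.hasDerivAt_arctan (b * Real.tan u)).comp u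
    ((Real.hasDerivAt_tan hc).const_mul b)

private lemma aux_convex {b : ℝ} (hb0 : 0 < b) (hb1 : b ≤ 1) :
    ConvexOn ℝ (Set.Icc (0:ℝ) (Real.pi/4)) (fun u => Real.arctan (b * Real.tan u)) := by
  have hπ := Real.pi_pos
  have hsub : Set.Icc (0:ℝ) (Real.pi/4) ⊆ {x | Real.cos x ≠ 0} := by
    intro x hx
    exact (Real.cos_pos_of_mem_Ioo ⟨by linarith [hx.1], by linarith [hx.2]⟩).ne'
  have hint : interior (Set.Icc (0:ℝ) (Real.pi/4)) = Set.Ioo 0 (Real.pi/4) :=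
    interior_Icc
  refine MonotoneOn.convexOn_of_deriv (convex_Icc _ _) ?_ ?_ ?_
  · exact Real.continuous_arctan.comp_continuousOn
      (continuousOn_const.mul (Real.continuousOn_tan.mono hsub))
  · rw [hint]
    intro u hu
    exact ((aux_hasDerivAt b (by linarith [hu.1]) (by linarith [hu.2])).differentiableAt).differentiableWithinAt
  · rw [hint]
    intro u hu v hv huv
    have hderiv : ∀ w ∈ Set.Ioo (0:ℝ) (Real.pi/4),
        deriv (fun u => Real.arctan (b * Real.tan u)) w
          = 1 / (1 + (b * Real.tan w) ^ 2) * (b * (Real.tan w ^ 2 + 1)) := by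
      intro w hw
      have h1 : -(Real.pi/2) < w := by linarith [hw.1]
      have h2 : w < Real.pi/2 := by linarith [hw.2]
      have hc : Real.cos w ≠ 0 := (Real.cos_pos_of_mem_Ioo ⟨h1, h2⟩).ne'
      rw [(aux_hasDerivAt b h1 h2).deriv, aux_one_div_cos_sq hc]
    rw [hderiv u hu, hderiv v hv]
    have htu : 0 ≤ Real.tan u := Real.tan_nonneg_of_nonneg_of_le_pi_div_two (le_of_lt hu.1) (by linarith [hu.2])
    have htuv : Real.tan u ≤ Real.tan v := by
      rcases eq_or_lt_of_le huv with h | h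
      · rw [h]
      · exact le_of_lt (Real.tan_lt_tan_of_nonneg_of_lt_pi_div_two (le_of_lt hu.1)
          (by linarith [hv.2]) h)
    set t := Real.tan u
    set s := Real.tan v
    have hts : 0 ≤ s := le_trans htu htuv
    rw [one_div_mul_eq_div, one_div_mul_eq_div,
      div_le_div_iff₀ (by positivity) (by positivity)]
    nlinarith [mul_nonneg (mul_nonneg hb0.le (sub_nonneg.2 (by nlinarith : b^2 ≤ 1)))
      (sub_nonneg.2 (by nlinarith : t^2 ≤ s^2))]

private lemma aux_upper {a b : ℝ} (ha0 : 0 < a) (ha1 : a ≤ 1) (hb0 : 0 < b) (hb1 : b ≤ 1) :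
    Real.arctan (a * b) ≤ 4 / Real.pi * (Real.arctan a * Real.arctan b) := by
  have hπ := Real.pi_pos
  have hA0 : 0 < Real.arctan a := by simpa using Real.arctan_strictMono ha0
  have hA1 : Real.arctan a ≤ Real.pi/4 := by
    rw [← Real.arctan_one]
    exact Real.arctan_strictMono.monotone ha1
  set lam : ℝ := 4 * Real.arctan a / Real.pi with hlam
  have hlam0 : 0 ≤ lam := by positivity
  have hlam1 : lam ≤ 1 := by
    rw [hlam, div_le_one hπ]; linarith
  have hcv := (aux_convex hb0 hb1).2
    (Set.mem_Icc.2 ⟨le_refl (0:ℝ), by positivity⟩)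
    (Set.mem_Icc.2 ⟨by positivity, le_refl (Real.pi/4)⟩)
    (show (0:ℝ) ≤ 1 - lam by linarith) hlam0 (show 1 - lam + lam = 1 by ring)
  have heval : (1 - lam) • (0:ℝ) + lam • (Real.pi/4) = Real.arctan a := by
    simp only [smul_eq_mul, hlam]
    field_simp
    ring
  rw [heval] at hcv
  simp only [smul_eq_mul, Real.tan_zero, mul_zero, Real.arctan_zero,
    Real.tan_pi_div_four, mul_one, Real.tan_arctan] at hcv
  have : Real.arctan (b * a) ≤ lam * Real.arctan b := by linarith
  calc Real.arctan (a * b) = Real.arctan (b * a) := by rw [mul_comm]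
    _ ≤ lam * Real.arctan b := this
    _ = 4 / Real.pi * (Real.arctan a * Real.arctan b) := by
        rw [hlam]; ring

private lemma aux_lower {a b : ℝ} (ha0 : 0 < a) (ha1 : a ≤ 1) (hb0 : 0 < b) (hb1 : b ≤ 1) :
    Real.arctan a + Real.arctan b - Real.pi/4 ≤ Real.arctan (a * b) := by
  have hπ := Real.pi_pos
  rcases lt_or_eq_of_le (mul_le_one₀ ha1 hb0.le hb1) with hab | hab
  · have h1 : Real.arctan a + Real.arctan b
        = Real.arctan ((a + b) / (1 - a * b)) := Real.arctan_add hab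
    have h2 : Real.arctan (a * b) + Real.pi/4
        = Real.arctan ((a * b + 1) / (1 - a * b * 1)) := by
      rw [← Real.arctan_one, ← Real.arctan_add (by rw [mul_one]; exact hab)]
    have h3 : (a + b) / (1 - a * b) ≤ (a * b + 1) / (1 - a * b * 1) := by
      rw [mul_one]
      apply div_le_div_of_nonneg_right ?_ (by linarith) |>.trans_eq rfl
      · nlinarith [mul_nonneg (sub_nonneg.2 ha1) (sub_nonneg.2 hb1)]
    have := Real.arctan_strictMono.monotone h3
    rw [← h1, ← h2] at this
    linarith
  · have ha : a = 1 := by nlinarith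
    have hb : b = 1 := by nlinarith
    subst ha; subst hb
    simp [Real.arctan_one]

/-- For all `x, y ∈ (0,1]`:
`x + y - 1 ≤ (4/π) * arctan (tan (π*x/4) * tan (π*y/4)) ≤ x * y`. -/
theorem arctan_tan_weierstrass :
    ∀ x ∈ Set.Ioc (0:ℝ) 1, ∀ y ∈ Set.Ioc (0:ℝ) 1,
      x + y - 1 ≤ (4 / Real.pi) * Real.arctan
          (Real.tan (Real.pi * x / 4) * Real.tan (Real.pi * y / 4)) ∧
        (4 / Real.pi) * Real.arctan
          (Real.tan (Real.pi * x / 4) * Real.tan (Real.pi * y / 4)) ≤ x * y := by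
  intro x hx y hy
  have hπ := Real.pi_pos
  obtain ⟨hx0, hx1⟩ := hx
  obtain ⟨hy0, hy1⟩ := hy
  have hmem : ∀ z : ℝ, 0 < z → z ≤ 1 →
      0 < Real.tan (Real.pi * z / 4) ∧ Real.tan (Real.pi * z / 4) ≤ 1 ∧
        Real.arctan (Real.tan (Real.pi * z / 4)) = Real.pi * z / 4 := by
    intro z hz0 hz1
    have h1 : 0 < Real.pi * z / 4 := by positivity
    have h2 : Real.pi * z / 4 ≤ Real.pi / 4 := by nlinarith
    refine ⟨Real.tan_pos_of_pos_of_lt_pi_div_two h1 (by linarith), ?_, ?_⟩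
    · rw [← Real.tan_pi_div_four]
      exact Real.strictMonoOn_tan.monotoneOn ⟨by linarith, by linarith⟩
        ⟨by linarith, by linarith⟩ h2
    · exact Real.arctan_tan (by linarith) (by linarith)
  obtain ⟨ha0, ha1, hAx⟩ := hmem x hx0 hx1
  obtain ⟨hb0, hb1, hAy⟩ := hmem y hy0 hy1
  set a := Real.tan (Real.pi * x / 4)
  set b := Real.tan (Real.pi * y / 4)
  constructor
  · have h := aux_lower ha0 ha1 hb0 hb1
    rw [hAx, hAy] at h
    have h4 : (0:ℝ) < 4 / Real.pi := by positivity
    calc x + y - 1 = 4 / Real.pi * (Real.pi * x / 4 + Real.pi * y / 4 - Real.pi / 4) := by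
          field_simp
      _ ≤ 4 / Real.pi * Real.arctan (a * b) :=
          mul_le_mul_of_nonneg_left h h4.le
  · have h := aux_upper ha0 ha1 hb0 hb1
    rw [hAx, hAy] at h
    have h4 : (0:ℝ) < 4 / Real.pi := by positivity
    calc 4 / Real.pi * Real.arctan (a * b)
        ≤ 4 / Real.pi * (4 / Real.pi * (Real.pi * x / 4 * (Real.pi * y / 4))) :=
          mul_le_mul_of_nonneg_left h h4.le
      _ = x * y := by field_simp
end

section
/- The function f(x) = cos x / cos 1 (which is positive and submultiplicative on (0,1] with f(1) = 1) is not an l-Weierstrass function on (0,1]: for all x, y ∈ (0,1) one has f(x·y) < f(x) + f(y) - 1, equivalently cos(x·y) + cos 1 < cos x + cos y. -/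
/-- The function `f x = cos x / cos 1` is not an l-Weierstrass function on `(0,1]`:
for all `x, y ∈ (0,1)` one has `f (x*y) < f x + f y - 1`, equivalently
`cos (x*y) + cos 1 < cos x + cos y`. -/
theorem cos_div_cos_one_not_lWeierstrass :
    ∀ x ∈ Set.Ioo (0:ℝ) 1, ∀ y ∈ Set.Ioo (0:ℝ) 1,
      Real.cos (x * y) / Real.cos 1 <
          Real.cos x / Real.cos 1 + Real.cos y / Real.cos 1 - 1 ∧
        Real.cos (x * y) + Real.cos 1 < Real.cos x + Real.cos y := by
  intro x hx y hy
  obtain ⟨hx0, hx1⟩ := hx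
  obtain ⟨hy0, hy1⟩ := hy
  set a : ℝ := (1 + y) / 2 with ha
  set b : ℝ := (1 - y) / 2 with hb
  have hpi : (1:ℝ) < Real.pi / 2 := by
    have := Real.pi_gt_three; linarith
  have ha0 : 0 < a := by simp [ha]; linarith
  have hb0 : 0 < b := by simp [hb]; linarith
  have ha1 : a < 1 := by simp [ha]; linarith
  have hb1 : b < 1 := by simp [hb]; linarith
  have e1 : Real.cos (x * y) - Real.cos x = 2 * Real.sin (x * a) * Real.sin (x * b) := by
    rw [Real.cos_sub_cos,
      show (x * y + x) / 2 = x * a by rw [ha]; ring,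
      show (x * y - x) / 2 = -(x * b) by rw [hb]; ring, Real.sin_neg]
    ring
  have e2 : Real.cos y - Real.cos 1 = 2 * Real.sin a * Real.sin b := by
    rw [Real.cos_sub_cos,
      show (y + 1) / 2 = a by rw [ha]; ring,
      show (y - 1) / 2 = -b by rw [hb]; ring, Real.sin_neg]
    ring
  have key : ∀ c : ℝ, 0 < c → c < 1 → Real.sin (x * c) < Real.sin c := by
    intro c hc0 hc1
    apply Real.sin_lt_sin_of_lt_of_le_pi_div_two (by nlinarith)
    · linarith
    · nlinarith
  have hsa := key a ha0 ha1
  have hsb := key b hb0 hb1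
  have hsa0 : 0 < Real.sin (x * a) :=
    Real.sin_pos_of_pos_of_lt_pi (by positivity) (by nlinarith [Real.pi_gt_three])
  have hsb0 : 0 < Real.sin (x * b) :=
    Real.sin_pos_of_pos_of_lt_pi (by positivity) (by nlinarith [Real.pi_gt_three])
  have main : Real.cos (x * y) + Real.cos 1 < Real.cos x + Real.cos y := by
    nlinarith [mul_lt_mul'' hsa hsb hsa0.le hsb0.le]
  refine ⟨?_, main⟩
  have hc : (0:ℝ) < Real.cos 1 := Real.cos_one_pos
  rw [show Real.cos x / Real.cos 1 + Real.cos y / Real.cos 1 - 1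
      = (Real.cos x + Real.cos y - Real.cos 1) / Real.cos 1 by field_simp,
    div_lt_div_iff_of_pos_right hc]
  linarith
end

section
/- Let n ≥ 2 and let x₁, …, xₙ be real numbers that are either all in (0,1] or all in [1,∞). Then ∏_{i=1}^n (1 + x_i) ≤ 2^{n-1} · (1 + ∏_{i=1}^n x_i). -/
lemma prod_one_add_le_aux (n : ℕ) (hn : 1 ≤ n) (x : Fin n → ℝ)
    (h : (∀ i, x i ∈ Set.Ioc (0:ℝ) 1) ∨ (∀ i, x i ∈ Set.Ici (1:ℝ))) :
    ∏ i, (1 + x i) ≤ 2 ^ (n - 1) * (1 + ∏ i, x i) := by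
  induction n with
  | zero => omega
  | succ m ih =>
    rcases Nat.eq_or_lt_of_le hn with h1 | h1
    · -- m = 0
      have hm : m = 0 := by omega
      subst hm
      simp [Fin.prod_univ_one]
    · have hm : 1 ≤ m := by omega
      have hrec := ih hm (fun i => x i.castSucc)
        (by rcases h with h | h
            · exact Or.inl fun i => h i.castSucc
            · exact Or.inr fun i => h i.castSucc)
      rw [Fin.prod_univ_castSucc, Fin.prod_univ_castSucc]
      set P := ∏ i : Fin m, x (Fin.castSucc i) with hP
      set y := x (Fin.last m) with hy
      have hQ : ∏ i : Fin m, (1 + x (Fin.castSucc i)) = ∏ i : Fin m, (1 + x i.castSucc) := rfl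
      have key : (1 + P) * (1 + y) ≤ 2 * (1 + P * y) := by
        have h0 : (1 - P) * (1 - y) ≥ 0 := by
          rcases h with h | h
          · have hP1 : P ≤ 1 := Finset.prod_le_one (fun i _ => (h i.castSucc).1.le)
              (fun i _ => (h i.castSucc).2)
            have hy1 : y ≤ 1 := (h (Fin.last m)).2
            exact mul_nonneg (by linarith) (by linarith)
          · have hP1 : 1 ≤ P := by
              rw [hP]
              calc (1:ℝ) = ∏ _i : Fin m, 1 := by simp
                _ ≤ _ := Finset.prod_le_prod (fun i _ => zero_le_one)
                    (fun i _ => Set.mem_Ici.mp (h (Fin.castSucc i)))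
            have hy1 : 1 ≤ y := Set.mem_Ici.mp (h (Fin.last m))
            nlinarith
        nlinarith [h0]
      have hyp : 0 < 1 + y := by
        rcases h with h | h
        · linarith [(h (Fin.last m)).1]
        · linarith [Set.mem_Ici.mp (h (Fin.last m))]
      have hP0 : 0 < 1 + P := by
        have : 0 < P := by
          rcases h with h | h
          · exact Finset.prod_pos fun i _ => (h i.castSucc).1
          · exact Finset.prod_pos fun i _ => lt_of_lt_of_le one_pos (Set.mem_Ici.mp (h (Fin.castSucc i)))
        linarith
      calc (∏ i : Fin m, (1 + x (Fin.castSucc i))) * (1 + y)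
          ≤ (2 ^ (m - 1) * (1 + P)) * (1 + y) := by
            apply mul_le_mul_of_nonneg_right _ hyp.le
            exact hrec
        _ = 2 ^ (m - 1) * ((1 + P) * (1 + y)) := by ring
        _ ≤ 2 ^ (m - 1) * (2 * (1 + P * y)) := by
            apply mul_le_mul_of_nonneg_left key (by positivity)
        _ = 2 ^ (m - 1 + 1) * (1 + P * y) := by ring
        _ = 2 ^ (m + 1 - 1) * (1 + P * y) := by rw [show m + 1 - 1 = m - 1 + 1 from by omega]

/-- If `n ≥ 2` and `x₁, …, xₙ` are real numbers that are either all in `(0,1]` or all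
in `[1,∞)`, then `∏ i, (1 + x i) ≤ 2^(n-1) * (1 + ∏ i, x i)`. -/
theorem prod_one_add_le (n : ℕ) (hn : 2 ≤ n) (x : Fin n → ℝ)
    (h : (∀ i, x i ∈ Set.Ioc (0:ℝ) 1) ∨ (∀ i, x i ∈ Set.Ici (1:ℝ))) :
    ∏ i, (1 + x i) ≤ 2 ^ (n - 1) * (1 + ∏ i, x i) := by
  exact prod_one_add_le_aux n (by omega) x h
end

section
/- Let J be either (0,1] or [1,∞), and let f be a positive function of class C² on J with f(1) = 1 which is log-convex on J (i.e. ln∘f is convex on J). If either (i) both f and x ↦ x·f(x) are strictly decreasing on J, or (ii) both f and x ↦ x·f(x) are strictly increasing on J, then f is an l-Weierstrass function on J: f(x·y) ≥ f(x) + f(y) - 1 for all x, y ∈ J. -/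
open Set Real

/-- Two-interval slope inequality for convex functions. -/
lemma lW_slope2 {s : Set ℝ} {φ : ℝ → ℝ} (h : ConvexOn ℝ s φ) {a b c d : ℝ}
    (ha : a ∈ s) (hb : b ∈ s) (hc : c ∈ s) (hd : d ∈ s)
    (hab : a < b) (hbc : b ≤ c) (hcd : c < d) :
    (φ b - φ a) / (b - a) ≤ (φ d - φ c) / (d - c) := by
  have h1 : (φ b - φ a) / (b - a) ≤ (φ d - φ a) / (d - a) :=
    h.secant_mono ha hb hd hab.ne' (by linarith : d ≠ a) (by linarith)
  have h2 : (φ d - φ a) / (d - a) ≤ (φ d - φ c) / (d - c) :=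
    h.secant_mono_aux3 ha hd (lt_of_lt_of_le hab hbc) hcd
  linarith

/-- Derivative of a function antitone to the right is nonpositive. -/
lemma lW_deriv_nonpos {f : ℝ → ℝ} {q t b : ℝ} (hq : HasDerivAt f q t) (htb : t < b)
    (hmono : ∀ s, t ≤ s → s ≤ b → f s ≤ f t) : q ≤ 0 := by
  have h1 : Filter.Tendsto (slope f t) (nhdsWithin t (Set.Ioi t)) (nhds q) :=
    (hasDerivAt_iff_tendsto_slope.mp hq).mono_left
      (nhdsWithin_mono _ (fun s hs => Set.mem_compl_singleton_iff.mpr (ne_of_gt hs)))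
  apply le_of_tendsto h1
  filter_upwards [Ioo_mem_nhdsGT_of_mem (⟨le_refl t, htb⟩ : t ∈ Set.Ico t b)] with s hs
  rw [slope_def_field]
  apply div_nonpos_of_nonpos_of_nonneg
  · have := hmono s hs.1.le hs.2.le
    linarith
  · linarith [hs.1]

/-- Let `J` be either `(0,1]` or `[1,∞)`, and let `f` be a positive `C²` function on `J`
with `f 1 = 1` which is log-convex on `J`. If either both `f` and `x ↦ x * f x` are
strictly decreasing on `J`, or both are strictly increasing on `J`, then `f` is an
l-Weierstrass function on `J`: `f (x*y) ≥ f x + f y - 1` for all `x, y ∈ J`. -/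
theorem lWeierstrass_of_logConvex (J : Set ℝ)
    (hJ : J = Set.Ioc (0:ℝ) 1 ∨ J = Set.Ici (1:ℝ))
    (f : ℝ → ℝ)
    (hC2 : ContDiffOn ℝ 2 f J)
    (hpos : ∀ x ∈ J, 0 < f x)
    (hf1 : f 1 = 1)
    (hlog : ConvexOn ℝ J (fun x => Real.log (f x)))
    (hmono : (StrictAntiOn f J ∧ StrictAntiOn (fun x => x * f x) J) ∨
             (StrictMonoOn f J ∧ StrictMonoOn (fun x => x * f x) J)) :
    ∀ x ∈ J, ∀ y ∈ J, f x + f y - 1 ≤ f (x * y) := by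
  have h1J : (1:ℝ) ∈ J := by
    rcases hJ with rfl | rfl
    · exact ⟨one_pos, le_refl 1⟩
    · exact Set.self_mem_Ici
  suffices key : ∀ x ∈ J, ∀ y ∈ J, x ≤ y → f x + f y - 1 ≤ f (x * y) by
    intro x hx y hy
    rcases le_total x y with h | h
    · exact key x hx y hy h
    · have := key y hy x hx h
      rw [mul_comm] at this
      linarith
  intro x hx y hy hxy
  rcases hJ with rfl | rfl
  · -- J = (0, 1]
    have hx0 : (0:ℝ) < x := hx.1
    have hx1 : x ≤ 1 := hx.2
    have hy0 : (0:ℝ) < y := hy.1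
    have hy1 : y ≤ 1 := hy.2
    have hxyJ : x * y ∈ Set.Ioc (0:ℝ) 1 := ⟨mul_pos hx0 hy0, by nlinarith⟩
    have hfx0 : 0 < f x := hpos x hx
    have hfy0 : 0 < f y := hpos y hy
    have hfxy0 : 0 < f (x*y) := hpos _ hxyJ
    rcases hmono with ⟨hf_anti, hxf_anti⟩ | ⟨hf_mono, hxf_mono⟩
    · -- HARD case: f and x*f x strictly decreasing on (0,1]
      rcases eq_or_lt_of_le hx1 with hxe | hx1'
      · rw [hxe, one_mul, hf1]; linarith
      · -- x < 1
        have hmapsto : ∀ t ∈ Set.Ioc (0:ℝ) 1, x * t ∈ Set.Ioc (0:ℝ) 1 :=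
          fun t ht => ⟨mul_pos hx0 ht.1, by nlinarith [ht.1, ht.2]⟩
        have hcontf : ContinuousOn f (Set.Ioc 0 1) := hC2.continuousOn
        have hconth : ContinuousOn (fun t => f (x*t) - f t) (Set.Ioc (0:ℝ) 1) := by
          apply ContinuousOn.sub
          · exact hcontf.comp (continuousOn_const.mul continuousOn_id) hmapsto
          · exact hcontf
        have hdiff : DifferentiableOn ℝ f (Set.Ioc 0 1) := hC2.differentiableOn (by norm_num)
        have hder : ∀ t ∈ Set.Ioo (0:ℝ) 1, HasDerivAt f (deriv f t) t := by
          intro t ht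
          have hmem : Set.Ioc (0:ℝ) 1 ∈ nhds t := Ioc_mem_nhds ht.1 ht.2
          exact ((hdiff t ⟨ht.1, ht.2.le⟩).differentiableAt hmem).hasDerivAt
        have hkey : ∀ t ∈ Set.Ioo (0:ℝ) 1,
            HasDerivAt (fun t => f (x*t) - f t) (x * deriv f (x*t) - deriv f t) t ∧
            x * deriv f (x*t) - deriv f t ≤ 0 := by
          intro t ht
          have hxt : x * t ∈ Set.Ioo (0:ℝ) 1 := ⟨mul_pos hx0 ht.1, by nlinarith [ht.1, ht.2]⟩
          have Hp := hder _ hxt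
          have Hq := hder t ht
          have hx' : HasDerivAt (fun s : ℝ => x * s) x t := by
            simpa using (hasDerivAt_id t).const_mul x
          have Hc : HasDerivAt (fun s => f (x*s)) (deriv f (x*t) * x) t :=
            HasDerivAt.comp t Hp hx'
          constructor
          · have := Hc.sub Hq
            exact this.congr_deriv (by ring)
          · have hxtJ : x * t ∈ Set.Ioc (0:ℝ) 1 := ⟨hxt.1, hxt.2.le⟩
            have htJ : t ∈ Set.Ioc (0:ℝ) 1 := ⟨ht.1, ht.2.le⟩
            have hfp : 0 < f (x*t) := hpos _ hxtJ
            have hfq : 0 < f t := hpos _ htJ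
            have hxtt : x * t < t := by nlinarith [ht.1]
            have hq0 : deriv f t ≤ 0 := by
              apply lW_deriv_nonpos Hq ht.2
              intro s hs1 hs2
              rcases eq_or_lt_of_le hs1 with h' | h'
              · rw [← h']
              · exact (hf_anti htJ ⟨lt_of_lt_of_le ht.1 hs1, hs2⟩ h').le
            have HLp : HasDerivAt (fun s => Real.log (f s)) (deriv f (x*t) / f (x*t)) (x*t) :=
              Hp.log hfp.ne'
            have HLq : HasDerivAt (fun s => Real.log (f s)) (deriv f t / f t) t :=
              Hq.log hfq.ne'
            have hs1 : deriv f (x*t) / f (x*t) ≤ slope (fun s => Real.log (f s)) (x*t) t :=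
              hlog.le_slope_of_hasDerivAt hxtJ htJ hxtt HLp
            have hs2 : slope (fun s => Real.log (f s)) (x*t) t ≤ deriv f t / f t :=
              hlog.slope_le_of_hasDerivAt hxtJ htJ hxtt HLq
            have hPQ : deriv f (x*t) * f t ≤ deriv f t * f (x*t) := by
              have := le_trans hs1 hs2
              rwa [div_le_div_iff₀ hfp hfq] at this
            have hxf : f t ≤ x * f (x*t) := by
              have h5 := hxf_anti hxtJ htJ hxtt
              simp only [] at h5
              nlinarith [ht.1]
            nlinarith [mul_le_mul_of_nonneg_left hPQ hx0.le,
              mul_le_mul_of_nonpos_left hxf hq0, hfq]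
        have hanti : AntitoneOn (fun t => f (x*t) - f t) (Set.Ioc (0:ℝ) 1) := by
          apply antitoneOn_of_deriv_nonpos (convex_Ioc 0 1) hconth
          · intro t ht
            rw [interior_Ioc] at ht
            exact ((hkey t ht).1).differentiableAt.differentiableWithinAt
          · intro t ht
            rw [interior_Ioc] at ht
            rw [(hkey t ht).1.deriv]
            exact (hkey t ht).2
        have h6 : f (x*1) - f 1 ≤ f (x*y) - f y := hanti hy h1J hy1
        rw [mul_one, hf1] at h6
        linarith
    · -- easy mixed case on (0,1]: f and x * f x strictly increasing
      rcases eq_or_lt_of_le hy1 with hye | hy1'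
      · rw [hye, mul_one] at *
        rw [hf1]; linarith
      · have hfx1 : f x ≤ 1 := by
          rcases eq_or_lt_of_le hx1 with h | h
          · rw [h, hf1]
          · have := hf_mono hx h1J h
            rw [hf1] at this; linarith
        have hfy1 : f y ≤ 1 := by
          have := hf_mono hy h1J hy1'
          rw [hf1] at this; linarith
        have hab : x * y < x := by nlinarith
        have S' : (Real.log (f x) - Real.log (f (x*y))) / (x - x*y)
            ≤ (Real.log (f 1) - Real.log (f y)) / (1 - y) :=
          lW_slope2 hlog hxyJ hx hy h1J hab hxy hy1'
        rw [hf1, Real.log_one] at S'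
        rw [div_le_div_iff₀ (by nlinarith) (by linarith)] at S'
        have hB0 : Real.log (f y) ≤ 0 := Real.log_nonpos hfy0.le hfy1
        have hC : Real.log (f x) + Real.log (f y) ≤ Real.log (f (x*y)) := by
          nlinarith [mul_nonneg (neg_nonneg.mpr hB0) (by linarith : (0:ℝ) ≤ 1 - x)]
        have hfxy : f x * f y ≤ f (x*y) := by
          calc f x * f y = Real.exp (Real.log (f x) + Real.log (f y)) := by
                rw [Real.exp_add, Real.exp_log hfx0, Real.exp_log hfy0]
            _ ≤ Real.exp (Real.log (f (x*y))) := Real.exp_le_exp.mpr hC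
            _ = f (x*y) := Real.exp_log hfxy0
        nlinarith [mul_nonneg (by linarith : (0:ℝ) ≤ 1 - f x) (by linarith : (0:ℝ) ≤ 1 - f y)]
  · -- J = [1, ∞)
    have hx1 : (1:ℝ) ≤ x := hx
    have hy1 : (1:ℝ) ≤ y := hy
    have hfx0 : 0 < f x := hpos x hx
    have hfy0 : 0 < f y := hpos y hy
    have hxyJ : x * y ∈ Set.Ici (1:ℝ) := by
      simp only [Set.mem_Ici]; nlinarith
    have hfxy0 : 0 < f (x*y) := hpos _ hxyJ
    rcases eq_or_lt_of_le hx1 with hxe | hx1'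
    · rw [← hxe, one_mul, hf1]; linarith
    have hyxy : y < x * y := by nlinarith
    have S' : (Real.log (f x) - Real.log (f 1)) / (x - 1)
        ≤ (Real.log (f (x*y)) - Real.log (f y)) / (x*y - y) :=
      lW_slope2 hlog h1J hx hy hxyJ hx1' hxy hyxy
    rw [hf1, Real.log_one] at S'
    rw [div_le_div_iff₀ (by linarith) (by nlinarith)] at S'
    have h3 : Real.log (f x) * y ≤ Real.log (f (x*y)) - Real.log (f y) := by
      nlinarith [S']
    rcases hmono with ⟨hf_anti, hxf_anti⟩ | ⟨hf_mono, hxf_mono⟩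
    · -- Bernoulli case: f, x*f x strictly decreasing on [1,∞)
      have hfx1 : f x ≤ 1 := by
        have := hf_anti h1J hx hx1'
        rw [hf1] at this; linarith
      have hy1' : (1:ℝ) < y := lt_of_lt_of_le hx1' hxy
      have hyfy : y * f y ≤ 1 := by
        have := hxf_anti h1J hy hy1'
        simp only [] at this
        rw [one_mul, hf1] at this; linarith
      have hfxy : f y * f x ^ y ≤ f (x*y) := by
        calc f y * f x ^ y = Real.exp (Real.log (f y) + Real.log (f x) * y) := by
              rw [Real.exp_add, Real.exp_log hfy0, Real.rpow_def_of_pos hfx0]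
          _ ≤ Real.exp (Real.log (f (x*y))) := Real.exp_le_exp.mpr (by linarith)
          _ = f (x*y) := Real.exp_log hfxy0
      have hB1 : 1 + y * (f x - 1) ≤ f x ^ y := by
        have hb := one_add_mul_self_le_rpow_one_add
          (by linarith : (-1:ℝ) ≤ f x - 1) hy1
        have h4 : (1:ℝ) + (f x - 1) = f x := by ring
        rw [h4] at hb
        exact hb
      nlinarith [hfxy, mul_le_mul_of_nonneg_left hB1 hfy0.le,
        mul_nonneg (by linarith : (0:ℝ) ≤ 1 - y * f y) (by linarith : (0:ℝ) ≤ 1 - f x)]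
    · -- f, x*f x strictly increasing on [1,∞)
      have hA0 : 0 ≤ Real.log (f x) := by
        apply Real.log_nonneg
        have := hf_mono h1J hx hx1'
        rw [hf1] at this; linarith
      have hfx1 : 1 ≤ f x := by
        have := hf_mono h1J hx hx1'
        rw [hf1] at this; linarith
      have hfy1 : 1 ≤ f y := by
        rcases eq_or_lt_of_le hy1 with h | h
        · rw [← h, hf1]
        · have := hf_mono h1J hy h
          rw [hf1] at this; linarith
      have hC : Real.log (f x) + Real.log (f y) ≤ Real.log (f (x*y)) := by
        nlinarith [mul_nonneg hA0 (by linarith : (0:ℝ) ≤ y - 1)]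
      have hfxy : f x * f y ≤ f (x*y) := by
        calc f x * f y = Real.exp (Real.log (f x) + Real.log (f y)) := by
              rw [Real.exp_add, Real.exp_log hfx0, Real.exp_log hfy0]
          _ ≤ Real.exp (Real.log (f (x*y))) := Real.exp_le_exp.mpr hC
          _ = f (x*y) := Real.exp_log hfxy0
      nlinarith [mul_nonneg (by linarith : (0:ℝ) ≤ f x - 1) (by linarith : (0:ℝ) ≤ f y - 1)]
end

section
/- Let a > 0 and suppose the Euler gamma function Γ is strictly decreasing on the interval (0, a+1] (this holds precisely when a ≤ x₁ := x_min - 1 ≈ 0.4616, where x_min is the unique minimizer of Γ on (0,∞)). Then for all u, v ∈ (0, a]: Γ(u·v/a) ≥ Γ(u) + Γ(v) - Γ(a). -/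
/-- Convexity of `t ↦ Γ(1/t)` on positive reals, expressed pointwise.
This is the perspective-function trick: `Γ(1/t) = t·Γ(1/t + 1)` and `x ↦ Γ(x+1)`
is convex on `(-1, ∞)`. -/
lemma gamma_inv_convex_combo {t1 t2 θ : ℝ} (h1 : 0 < t1) (h2 : 0 < t2)
    (hθ0 : 0 ≤ θ) (hθ1 : θ ≤ 1) :
    Real.Gamma (1 / (θ * t1 + (1 - θ) * t2)) ≤
      θ * Real.Gamma (1 / t1) + (1 - θ) * Real.Gamma (1 / t2) := by
  set t : ℝ := θ * t1 + (1 - θ) * t2 with htdef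
  have ht : 0 < t := by
    rcases eq_or_lt_of_le hθ1 with rfl | hθ
    · rw [htdef]; linarith
    · have h3 : 0 ≤ θ * t1 := mul_nonneg hθ0 h1.le
      have h4 : 0 < (1 - θ) * t2 := mul_pos (by linarith) h2
      linarith
  set μ : ℝ := θ * t1 / t with hμdef
  have hμ0 : 0 ≤ μ := by positivity
  have hμ1 : μ ≤ 1 := by
    rw [hμdef, div_le_one ht]
    nlinarith [mul_nonneg (sub_nonneg.2 hθ1) h2.le]
  have hG : ConvexOn ℝ ((fun z => 1 + z) ⁻¹' Set.Ioi 0)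
      (Real.Gamma ∘ fun z => (1:ℝ) + z) :=
    Real.convexOn_Gamma.translate_right 1
  have hm1 : (1 / t1 : ℝ) ∈ (fun z => 1 + z) ⁻¹' Set.Ioi (0:ℝ) := by
    simp only [Set.mem_preimage, Set.mem_Ioi]; positivity
  have hm2 : (1 / t2 : ℝ) ∈ (fun z => 1 + z) ⁻¹' Set.Ioi (0:ℝ) := by
    simp only [Set.mem_preimage, Set.mem_Ioi]; positivity
  have hkey := hG.2 hm1 hm2 hμ0 (by linarith : (0:ℝ) ≤ 1 - μ) (by ring)
  simp only [Function.comp_apply, smul_eq_mul] at hkey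
  have hcombo : μ * (1 / t1) + (1 - μ) * (1 / t2) = 1 / t := by
    rw [hμdef]
    field_simp
    ring
  rw [hcombo] at hkey
  have gadd : ∀ x : ℝ, 0 < x → Real.Gamma (1 + 1/x) = (1/x) * Real.Gamma (1/x) := by
    intro x hx
    rw [add_comm, Real.Gamma_add_one (by positivity)]
  rw [gadd t ht, gadd t1 h1, gadd t2 h2] at hkey
  -- hkey : (1/t) * Γ(1/t) ≤ μ * ((1/t1) * Γ(1/t1)) + (1-μ) * ((1/t2) * Γ(1/t2))
  have hmul := mul_le_mul_of_nonneg_left hkey ht.le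
  have h3 : t * ((1/t) * Real.Gamma (1/t)) = Real.Gamma (1/t) := by
    field_simp
  have h4 : t * (μ * ((1/t1) * Real.Gamma (1/t1)) + (1-μ) * ((1/t2) * Real.Gamma (1/t2)))
      = θ * Real.Gamma (1/t1) + (1 - θ) * Real.Gamma (1/t2) := by
    rw [hμdef]
    field_simp
    ring
  rw [h3, h4] at hmul
  exact hmul

set_option maxHeartbeats 1000000 in
/-- Let `a > 0` and suppose the Euler gamma function `Γ` is strictly decreasing on
`(0, a+1]`. Then for all `u, v ∈ Set.Ioc 0 a`: `Γ (u*v/a) ≥ Γ u + Γ v - Γ a`. -/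
theorem gamma_lWeierstrass_subst (a : ℝ) (ha : 0 < a)
    (hdec : StrictAntiOn Real.Gamma (Set.Ioc 0 (a + 1))) :
    ∀ u ∈ Set.Ioc (0:ℝ) a, ∀ v ∈ Set.Ioc (0:ℝ) a,
      Real.Gamma u + Real.Gamma v - Real.Gamma a ≤ Real.Gamma (u * v / a) := by
  rintro u ⟨hu0, hua⟩ v ⟨hv0, hva⟩
  rcases eq_or_lt_of_le hva with rfl | hva
  · have h : u * v / v = u := by field_simp
    rw [h]; linarith
  rcases eq_or_lt_of_le hua with rfl | hua
  · have h : u * v / u = v := by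
      rw [mul_comm, mul_div_assoc, div_self hu0.ne', mul_one]
    rw [h]; linarith
  -- now 0 < u < a, 0 < v < a
  set p : ℝ := 1/u + 1/v - 1/a with hpdef
  have hau : 1/a < 1/u := one_div_lt_one_div_of_lt hu0 hua
  have hav : 1/a < 1/v := one_div_lt_one_div_of_lt hv0 hva
  have hp0 : 0 < p := by
    have : 0 < 1/u := by positivity
    simp only [hpdef]; linarith
  have hden : 0 < p - 1/a := by simp only [hpdef]; linarith
  set θr : ℝ := (1/v - 1/a) / (p - 1/a) with hθrdef
  set θs : ℝ := (1/u - 1/a) / (p - 1/a) with hθsdef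
  have hθr0 : 0 ≤ θr := div_nonneg (by linarith) hden.le
  have hθs0 : 0 ≤ θs := div_nonneg (by linarith) hden.le
  have hθsum : θr + θs = 1 := by
    have e : (1/v - 1/a) + (1/u - 1/a) = p - 1/a := by rw [hpdef]; ring
    rw [hθrdef, hθsdef, ← add_div, e, div_self hden.ne']
  have hθr1 : θr ≤ 1 := by linarith
  have hθs1 : θs ≤ 1 := by linarith
  have hcr : θr * (1/a) + (1 - θr) * p = 1/u := by
    have h : θr * (p - 1/a) = 1/v - 1/a := by
      rw [hθrdef, div_mul_cancel₀ _ hden.ne']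
    simp only [hpdef] at h ⊢; nlinarith [h]
  have hcs : θs * (1/a) + (1 - θs) * p = 1/v := by
    have h : θs * (p - 1/a) = 1/u - 1/a := by
      rw [hθsdef, div_mul_cancel₀ _ hden.ne']
    simp only [hpdef] at h ⊢; nlinarith [h]
  have hA := gamma_inv_convex_combo (t1 := 1/a) (t2 := p) (θ := θr)
    (by positivity) hp0 hθr0 hθr1
  have hB := gamma_inv_convex_combo (t1 := 1/a) (t2 := p) (θ := θs)
    (by positivity) hp0 hθs0 hθs1
  rw [hcr, one_div_one_div, one_div_one_div] at hA
  rw [hcs, one_div_one_div, one_div_one_div] at hB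
  -- hA : Γ u ≤ θr * Γ a + (1-θr) * Γ (1/p), similarly hB
  have hGa : θr * Real.Gamma a + θs * Real.Gamma a = Real.Gamma a := by
    rw [← add_mul, hθsum, one_mul]
  have hGp : (1-θr) * Real.Gamma (1/p) + (1-θs) * Real.Gamma (1/p)
      = Real.Gamma (1/p) := by
    rw [← add_mul, show (1-θr)+(1-θs) = 1 by linarith, one_mul]
  have hsum : Real.Gamma u + Real.Gamma v ≤ Real.Gamma a + Real.Gamma (1/p) := by
    linarith
  -- finally Γ (1/p) ≤ Γ (u*v/a) since u*v/a ≤ 1/p, both in (0, a+1]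
  have hw0 : 0 < u * v / a := by positivity
  have hwle : u * v / a ≤ 1/p := by
    rw [le_div_iff₀ hp0]
    have e : u * v / a * p = (v*a + u*a - u*v)/a^2 := by
      rw [hpdef]; field_simp
    rw [e, div_le_one (by positivity)]
    nlinarith [mul_nonneg (sub_nonneg.2 hua.le) (sub_nonneg.2 hva.le)]
  have h1p : 1/u ≤ p := by simp only [hpdef]; linarith
  have hpu : 1/p ≤ u := by
    have h := one_div_le_one_div_of_le (by positivity : (0:ℝ) < 1/u) h1p
    rwa [one_div_one_div] at h
  have hp_mem : (1/p : ℝ) ∈ Set.Ioc (0:ℝ) (a+1) := ⟨by positivity, by linarith⟩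
  have hw_mem : (u * v / a) ∈ Set.Ioc (0:ℝ) (a+1) := by
    refine ⟨hw0, ?_⟩
    have h : u * v / a ≤ u := by
      rw [div_le_iff₀ ha]; nlinarith
    linarith
  have hlast : Real.Gamma (1/p) ≤ Real.Gamma (u * v / a) := by
    rcases eq_or_lt_of_le hwle with h | h
    · rw [h]
    · exact (hdec hw_mem hp_mem h).le
  linarith
end
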